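/- Let φ be a continuous K-algebra homomorphism K{{x}} → K{{x,y} (restriction of a substitution homomorphism) and let δ : K{{x}} → K{{x,y} be any continuous K-linear map of the form δ = (dφ) ∘ d − d ∘ φ where dφ is a continuous K-algebra homomorphism agreeing with φ on K{{x}} except at differentials. Then δ satisfies δ(•_m(f_1,…,f_m)) = Σ_{i=1}^m •_m(φ(f_1),…,φ(f_{i−1}), δ(f_i), φ(f_{i+1}),…,φ(f_m)) for all m ≥ 2 and f_1,…,f_m ∈ K{{x}}; consequently any continuous K-linear map δ : K{{x}} → K{{x,y} satisfying this identity together with δ(x) = 0 and δ(1_P) = 0 is identically zero. -/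

import Mathlib

namespace Planar

inductive PVar : Type
  | vx : PVar
  | vy : PVar
deriving DecidableEq

/-- A finite planar reduced rooted tree: every internal vertex has at least two
(ordered) children, encoded as `node t₁ t₂ rest` with children list `t₁ :: t₂ :: rest`;
leaves are labeled by a variable (an isomorphism class of such a labeled tree is
faithfully represented by this inductive data). -/
inductive PTree : Type
  | leaf : PVar → PTree
  | node : PTree → PTree → List PTree → PTree

namespace PTree

/-- The number of leaves carrying the label `v`. -/
def countLeaf (v : PVar) : PTree → ℕ
  | .leaf w => if w = v then 1 else 0
  | .node t1 t2 rest =>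
      countLeaf v t1 + countLeaf v t2 + (rest.attach.map fun t => countLeaf v t.1).sum
decreasing_by
  all_goals simp_wf
  · omega
  · omega
  · have := List.sizeOf_lt_of_mem t.2
    omega

end PTree

/-- `P'(x,y)`: planar monomials plus the empty tree `1_P` (= `none`). -/
abbrev PT := Option PTree

/-- `deg_x`: the number of leaves labeled `x`. -/
def degx (S : PT) : ℕ := S.elim 0 (PTree.countLeaf .vx)

/-- `deg_y`: the number of leaves labeled `y`. -/
def degy (S : PT) : ℕ := S.elim 0 (PTree.countLeaf .vy)

/-- `m`-ary grafting `•_m` on `P'(x,y)` (`m = l.length`): join the non-trivial entries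
at a new root; the conventions `•_m(1_P,…,1_P) = 1_P`, dropping of `1_P`-entries and
`•_2(S,1_P) = •_2(1_P,S) = S` amount to discarding the `1_P`-entries first. -/
def graft (l : List PT) : PT :=
  match l.reduceOption with
  | [] => none
  | [t] => some t
  | t1 :: t2 :: ts => some (.node t1 t2 ts)

variable (K : Type) [Field K]

/-- The algebra `K{{x,y}` of planar power series in `x` and polynomials in `y`:
functions on `P'(x,y)` such that for every `n` only finitely many monomials of
`x`-degree `n` have a nonzero coefficient. -/
def PSer : Type := {f : PT → K // ∀ n : ℕ, {S : PT | f S ≠ 0 ∧ degx S = n}.Finite}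

variable {K}

namespace PSer

private lemma finite_add (f g : PSer K) (n : ℕ) :
    {S : PT | f.1 S + g.1 S ≠ 0 ∧ degx S = n}.Finite := by
  apply ((f.2 n).union (g.2 n)).subset
  rintro S ⟨hne, hdeg⟩
  by_cases h1 : f.1 S = 0
  · exact Or.inr ⟨by simpa [h1] using hne, hdeg⟩
  · exact Or.inl ⟨h1, hdeg⟩

private lemma finite_neg (f : PSer K) (n : ℕ) :
    {S : PT | -f.1 S ≠ 0 ∧ degx S = n}.Finite := by
  apply (f.2 n).subset
  rintro S ⟨hne, hdeg⟩
  exact ⟨by simpa using hne, hdeg⟩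

private lemma finite_zero (n : ℕ) :
    {S : PT | (0 : K) ≠ 0 ∧ degx S = n}.Finite := by
  convert Set.finite_empty using 1
  ext S; simp

private lemma finite_smul (a : K) (f : PSer K) (n : ℕ) :
    {S : PT | a * f.1 S ≠ 0 ∧ degx S = n}.Finite := by
  apply (f.2 n).subset
  rintro S ⟨hne, hdeg⟩
  exact ⟨fun h => hne (by simp [h]), hdeg⟩

noncomputable instance : AddCommGroup (PSer K) where
  add f g := ⟨fun S => f.1 S + g.1 S, finite_add f g⟩
  zero := ⟨fun _ => 0, finite_zero⟩
  neg f := ⟨fun S => -f.1 S, finite_neg f⟩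
  add_assoc f g h := Subtype.ext (funext fun S => add_assoc _ _ _)
  add_comm f g := Subtype.ext (funext fun S => add_comm _ _)
  zero_add f := Subtype.ext (funext fun S => zero_add _)
  add_zero f := Subtype.ext (funext fun S => add_zero _)
  neg_add_cancel f := Subtype.ext (funext fun S => neg_add_cancel _)
  nsmul n f := ⟨fun S => (n : K) * f.1 S, finite_smul _ f⟩
  nsmul_zero f := Subtype.ext (funext fun S => by
    show ((0 : ℕ) : K) * f.1 S = (0 : K); simp)
  nsmul_succ n f := Subtype.ext (funext fun S => by
    show ((n + 1 : ℕ) : K) * f.1 S = (n : K) * f.1 S + f.1 S; push_cast; ring)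
  zsmul n f := ⟨fun S => (n : K) * f.1 S, finite_smul _ f⟩
  zsmul_zero' f := Subtype.ext (funext fun S => by
    show ((0 : ℤ) : K) * f.1 S = (0 : K); simp)
  zsmul_succ' n f := Subtype.ext (funext fun S => by
    show ((Int.ofNat n.succ : ℤ) : K) * f.1 S = ((Int.ofNat n : ℤ) : K) * f.1 S + f.1 S
    simp only [Int.ofNat_eq_coe]; push_cast; ring)
  zsmul_neg' n f := Subtype.ext (funext fun S => by
    show ((Int.negSucc n : ℤ) : K) * f.1 S = -(((n.succ : ℤ) : K) * f.1 S)
    simp [Int.negSucc_eq]; push_cast; ring)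

noncomputable instance : Module K (PSer K) where
  smul a f := ⟨fun S => a * f.1 S, finite_smul a f⟩
  one_smul f := Subtype.ext (funext fun S => one_mul _)
  mul_smul a b f := Subtype.ext (funext fun S => mul_assoc _ _ _)
  smul_zero a := Subtype.ext (funext fun S => mul_zero _)
  smul_add a f g := Subtype.ext (funext fun S => mul_add _ _ _)
  add_smul a b f := Subtype.ext (funext fun S => add_mul _ _ _)
  zero_smul f := Subtype.ext (funext fun S => zero_mul _)

@[simp] lemma add_coeff (f g : PSer K) (S : PT) : (f + g).1 S = f.1 S + g.1 S := rfl
@[simp] lemma smul_coeff (a : K) (f : PSer K) (S : PT) : (a • f).1 S = a * f.1 S := rfl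
@[simp] lemma zero_coeff (S : PT) : (0 : PSer K).1 S = 0 := rfl

end PSer

open PSer

/-- The indicator series of a single planar monomial `S ∈ P'(x,y)`. -/
noncomputable def mono (S : PT) : PSer K := by
  classical
  refine ⟨fun T => if T = S then 1 else 0, fun n => (Set.finite_singleton S).subset ?_⟩
  rintro T ⟨h1, -⟩
  by_contra hc
  exact h1 (if_neg (by simpa [Set.mem_singleton_iff] using hc))

/-- The unit series `1_P` (the empty tree). -/
noncomputable def onePS : PSer K := mono none

/-- The series `x` (the one-vertex tree labeled `x`). -/
noncomputable def Xps : PSer K := mono (some (.leaf .vx))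

/-- The series `y = dx` (the one-vertex tree labeled `y`). -/
noncomputable def Yps : PSer K := mono (some (.leaf .vy))

/-- Coefficient of the product `•_m(f₁,…,f_m)` at `S`: the (finite) sum of
`c_{S₁}(f₁)⋯c_{S_m}(f_m)` over all decompositions `S = •_m(S₁,…,S_m)`. -/
noncomputable def bulletCoeff (fs : List (PSer K)) (S : PT) : K :=
  ∑ᶠ t ∈ {t : List PT | t.length = fs.length ∧ graft t = S},
    (List.zipWith (fun f u => f.1 u) fs t).prod

open Classical in
/-- The `m`-ary product `•_m(f₁,…,f_m)` on `K{{x,y}` (`m = fs.length`). -/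
noncomputable def bullet (fs : List (PSer K)) : PSer K :=
  if h : ∀ n : ℕ, {S : PT | bulletCoeff fs S ≠ 0 ∧ degx S = n}.Finite
  then ⟨bulletCoeff fs, h⟩ else 0

/-- The `x`-order `ord_x(f) ∈ ℕ ∪ {∞}`: the least `x`-degree of a monomial with
nonzero coefficient (`∞` for `f = 0`). -/
noncomputable def ordx (f : PSer K) : ℕ∞ :=
  ⨅ S ∈ {S : PT | f.1 S ≠ 0}, (degx S : ℕ∞)

/-- The `x`-adic absolute value `|f|ₓ = (1/2)^{ord_x f}` (`= 0` for `f = 0`). -/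
noncomputable def normx (f : PSer K) : ℝ :=
  if ordx f = ⊤ then 0 else (2⁻¹ : ℝ) ^ (ordx f).toNat

/-- The `x`-adic distance `|f - g|ₓ`. -/
noncomputable def distx (f g : PSer K) : ℝ := normx (f - g)

/-- A Cauchy sequence for the `x`-adic distance. -/
def IsCauchySeq (u : ℕ → PSer K) : Prop :=
  ∀ ε : ℝ, 0 < ε → ∃ N : ℕ, ∀ p q : ℕ, N ≤ p → N ≤ q → distx (u p) (u q) < ε

/-- Convergence of a sequence to `f` for the `x`-adic distance. -/
def TendstoSeq (u : ℕ → PSer K) (f : PSer K) : Prop :=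
  ∀ ε : ℝ, 0 < ε → ∃ N : ℕ, ∀ p : ℕ, N ≤ p → distx (u p) f < ε

/-- Continuity of a map between two spaces equipped with distance functions. -/
def ContWrt {α β : Type*} (dα : α → α → ℝ) (dβ : β → β → ℝ) (φ : α → β) : Prop :=
  ∀ a : α, ∀ ε : ℝ, 0 < ε → ∃ δ : ℝ, 0 < δ ∧ ∀ b : α, dα b a < δ → dβ (φ b) (φ a) < ε

/-- The property of being supported on monomials all of whose leaves are labeled `x`. -/
def OnlyX (f : PSer K) : Prop := ∀ S : PT, f.1 S ≠ 0 → degy S = 0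

variable (K) in
/-- `K{{x}}`, the closed unital subalgebra of `K{{x,y}` generated by `x`, as a
submodule: the series supported on `1_P` and trees all of whose leaves are labeled `x`. -/
noncomputable def kxSub : Submodule K (PSer K) where
  carrier := {f | OnlyX f}
  add_mem' := by
    intro f g hf hg S hS
    by_cases h1 : f.1 S = 0
    · exact hg S (by simpa [h1] using hS)
    · exact hf S h1
  zero_mem' := by intro S hS; simp at hS
  smul_mem' := by
    intro a f hf S hS
    exact hf S (fun h => hS (by simp [h]))

variable (K) in
/-- The space `K{{x}}` of planar power series in `x`. -/
abbrev Kx : Type _ := ↥(kxSub K)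

@[simp] lemma mem_kxSub {f : PSer K} : f ∈ kxSub K ↔ OnlyX f := Iff.rfl

/-- The `x`-adic distance on `K{{x}}`. -/
noncomputable def distKx (f g : Kx K) : ℝ := distx f.1 g.1

lemma onePS_mem_kxSub : onePS ∈ kxSub (K := K) := by
  intro S hS
  by_cases h : S = none
  · subst h; rfl
  · exact absurd (if_neg h) hS

lemma Xps_mem_kxSub : Xps ∈ kxSub (K := K) := by
  intro S hS
  by_cases h : S = some (.leaf .vx)
  · subst h; simp [degy, PTree.countLeaf]
  · exact absurd (if_neg h) hS

/-- `1_P` as an element of `K{{x}}`. -/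
noncomputable def oneX : Kx K := ⟨onePS, onePS_mem_kxSub⟩

/-- `x` as an element of `K{{x}}`. -/
noncomputable def xX : Kx K := ⟨Xps, Xps_mem_kxSub⟩

open Classical in
/-- The `m`-ary product `•_m` on `K{{x}}` (`m = fs.length`). -/
noncomputable def bulletX (fs : List (Kx K)) : Kx K :=
  if h : bullet (fs.map (fun f => f.1)) ∈ kxSub K
  then ⟨bullet (fs.map (fun f => f.1)), h⟩ else 0

open Classical in
/-- The homogeneous component of degree `n` (w.r.t. `deg_x`) of a planar power series. -/
noncomputable def comp (f : PSer K) (n : ℕ) : PSer K :=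
  ⟨fun S => if degx S = n then f.1 S else 0, by
    intro m
    apply (f.2 m).subset
    rintro S ⟨h1, h2⟩
    refine ⟨?_, h2⟩
    by_cases hd : degx S = n
    · simpa [hd] using h1
    · simp [hd] at h1⟩

/-- The homogeneous component of degree `n` of an element of `K{{x}}`. -/
noncomputable def compX (f : Kx K) (n : ℕ) : Kx K :=
  ⟨comp f.1 n, by
    intro S hS
    apply (mem_kxSub.mp f.2) S
    simp only [comp] at hS
    by_cases hd : degx S = n
    · simpa [hd] using hS
    · simp [hd] at hS⟩

/-- A substitution homomorphism `φ_{(g,h)} : K{{x,y} → K{{x,y}`: `K`-linear, compatible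
with all grafting operations `•_m` (`m ≥ 2`), unital, `x ↦ g`, `y ↦ h`, and continuous
for the `x`-adic topology. -/
structure IsSubstHom (g h : PSer K) (φ : PSer K → PSer K) : Prop where
  linear : IsLinearMap K φ
  map_graft : ∀ fs : List (PSer K), 2 ≤ fs.length → φ (bullet fs) = bullet (fs.map φ)
  map_one : φ onePS = onePS
  map_X : φ Xps = g
  map_Y : φ Yps = h
  cont : ContWrt distx distx φ

/-- A substitution homomorphism `φ_g : K{{x}} → K{{x}}` with `x ↦ g`. -/
structure IsSubstHomX (g : Kx K) (φ : Kx K → Kx K) : Prop where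
  linear : IsLinearMap K φ
  map_graft : ∀ fs : List (Kx K), 2 ≤ fs.length → φ (bulletX fs) = bulletX (fs.map φ)
  map_one : φ oneX = oneX
  map_X : φ xX = g
  cont : ContWrt distKx distKx φ

/-- The universal derivation `d : K{{x}} → K{{x,y}`: continuous, `K`-linear, `d x = y`,
and satisfying the Leibniz rule for every grafting operation `•_m` (`m ≥ 2`). -/
structure IsUDeriv (d : Kx K → PSer K) : Prop where
  linear : IsLinearMap K d
  cont : ContWrt distKx distx d
  map_X : d xX = Yps
  leibniz : ∀ fs : List (Kx K), 2 ≤ fs.length →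
    d (bulletX fs) = ∑ i : Fin fs.length,
      bullet ((fs.map (fun f => f.1)).set i.1 (d (fs.get i)))

/-- The `k`-ary planar exponential series `Exp_k(x)`: constant coefficient `1`,
coefficient `1` at `x`, and `Exp_k(kx) = •_k(Exp_k(x),…,Exp_k(x))`. -/
structure IsExp (k : ℕ) (f : Kx K) : Prop where
  coeff_one : f.1.1 none = 1
  coeff_X : f.1.1 (some (.leaf .vx)) = 1
  funEq : ∀ φ : Kx K → Kx K, IsSubstHomX ((k : K) • xX) φ →
    φ f = bulletX (List.replicate k f)

/-- `ℓ = Log_k(1+x)`, the planar logarithm attached to a planar exponential series `e`: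
`ord_x ℓ ≥ 1` and `ℓ(e - 1) = x`. -/
structure IsLogOf (e ℓ : Kx K) : Prop where
  ord : 1 ≤ ordx ℓ.1
  eq : ∀ φ : Kx K → Kx K, IsSubstHomX (e - oneX) φ → φ ℓ = xX

section Aux

namespace PSer

@[simp] lemma neg_coeff (f : PSer K) (S : PT) : (-f).1 S = -f.1 S := rfl

@[simp] lemma sub_coeff (f g : PSer K) (S : PT) : (f - g).1 S = f.1 S - g.1 S := by
  show (f + -g).1 S = _
  rw [add_coeff, neg_coeff, sub_eq_add_neg]

end PSer

open Classical in
@[simp] lemma mono_coeff (S T : PT) : (mono S : PSer K).1 T = if T = S then 1 else 0 := by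
  rfl

/-- Lists of a fixed length over a finite alphabet form a finite set. -/
lemma finite_lists {α : Type*} {B : Set α} (hB : B.Finite) :
    ∀ m : ℕ, {t : List α | t.length = m ∧ ∀ u ∈ t, u ∈ B}.Finite := by
  intro m
  induction m with
  | zero =>
    apply Set.Finite.subset (Set.finite_singleton ([] : List α))
    rintro t ⟨h, -⟩
    simpa using List.length_eq_zero_iff.mp h
  | succ m ih =>
    apply Set.Finite.subset ((hB.prod ih).image (fun p => p.1 :: p.2))
    rintro t ⟨hl, hm⟩
    cases t with
    | nil => simp at hl
    | cons a t =>
      refine ⟨(a, t), ⟨hm a (by simp), ?_, fun u hu => hm u (by simp [hu])⟩, rfl⟩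
      simpa using hl

/-- The finitely many possible entries of a decomposition of `S`. -/
def parts : PT → Set PT
  | none => {none}
  | some s => {none, some s} ∪ (match s with
      | .leaf _ => ∅
      | .node a b c => {some a, some b} ∪ (fun u => some u) '' {u | u ∈ c})

lemma parts_finite (S : PT) : (parts S).Finite := by
  cases S with
  | none => exact Set.finite_singleton _
  | some s =>
    apply Set.Finite.union ((Set.finite_singleton _).insert _)
    cases s with
    | leaf v => exact Set.finite_empty
    | node a b c =>
      exact Set.Finite.union ((Set.finite_singleton _).insert _)
        (c.finite_toSet.image _)

lemma mem_parts {t : List PT} {S : PT} (h : graft t = S) : ∀ u ∈ t, u ∈ parts S := by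
  intro u hu
  have h' : (match t.reduceOption with
      | [] => (none : PT)
      | [t1] => some t1
      | t1 :: t2 :: ts => some (.node t1 t2 ts)) = S := h
  cases u with
  | none =>
    cases S with
    | none => exact rfl
    | some s => exact Or.inl (Or.inl rfl)
  | some w =>
    have hw : w ∈ t.reduceOption := List.reduceOption_mem_iff.mpr hu
    rcases hr : t.reduceOption with _ | ⟨a, tl⟩
    · rw [hr] at hw; simp at hw
    · cases tl with
      | nil =>
        rw [hr] at h' hw
        simp at hw
        subst hw
        rw [← h']
        exact Or.inl (Or.inr rfl)
      | cons b c =>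
        rw [hr] at h' hw
        rw [← h']
        simp only [parts]
        simp only [List.mem_cons] at hw
        rcases hw with rfl | rfl | hw
        · exact Or.inr (Or.inl (Or.inl rfl))
        · exact Or.inr (Or.inl (Or.inr rfl))
        · exact Or.inr (Or.inr ⟨w, hw, rfl⟩)

lemma decomp_finite (m : ℕ) (S : PT) : {t : List PT | t.length = m ∧ graft t = S}.Finite :=
  (finite_lists (parts_finite S) m).subset (fun _ ht => ⟨ht.1, fun u hu => mem_parts ht.2 u hu⟩)

/-- The decompositions of `S` into `m` factors, as a finset. -/
noncomputable def decompFS (m : ℕ) (S : PT) : Finset (List PT) := (decomp_finite m S).toFinset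

lemma mem_decompFS {m : ℕ} {S : PT} {t : List PT} :
    t ∈ decompFS m S ↔ t.length = m ∧ graft t = S := by
  simp [decompFS]

lemma bulletCoeff_eq_sum (fs : List (PSer K)) (S : PT) :
    bulletCoeff fs S =
      ∑ t ∈ decompFS fs.length S, (List.zipWith (fun f u => f.1 u) fs t).prod := by
  rw [bulletCoeff, ← finsum_mem_coe_finset]
  congr 1
  simp [decompFS]

lemma countLeaf_node (v : PVar) (t1 t2 : PTree) (rest : List PTree) :
    PTree.countLeaf v (.node t1 t2 rest) =
      PTree.countLeaf v t1 + PTree.countLeaf v t2 + (rest.map (PTree.countLeaf v)).sum := by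
  rw [PTree.countLeaf]
  congr 2
  exact List.attach_map_val (l := rest) (f := PTree.countLeaf v)

lemma sum_reduceOption (v : PVar) (t : List PT) :
    (t.map (fun S => S.elim 0 (PTree.countLeaf v))).sum =
      (t.reduceOption.map (PTree.countLeaf v)).sum := by
  induction t with
  | nil => rfl
  | cons a t ih => cases a <;> simp [ih]

lemma deg_graft (v : PVar) (t : List PT) :
    (graft t).elim 0 (PTree.countLeaf v) =
      (t.map (fun S => S.elim 0 (PTree.countLeaf v))).sum := by
  rw [sum_reduceOption]
  show (match t.reduceOption with
    | [] => (none : PT)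
    | [t1] => some t1
    | t1 :: t2 :: ts => some (.node t1 t2 ts)).elim 0 (PTree.countLeaf v) = _
  rcases t.reduceOption with _ | ⟨a, _ | ⟨b, c⟩⟩
  · rfl
  · simp
  · simp [countLeaf_node]; omega

lemma degx_graft (t : List PT) : degx (graft t) = (t.map degx).sum := deg_graft .vx t

lemma degy_graft (t : List PT) : degy (graft t) = (t.map degy).sum := deg_graft .vy t

lemma zip_ne_zero {fs : List (PSer K)} {t : List PT} (hlen : t.length = fs.length)
    (h : (List.zipWith (fun f u => f.1 u) fs t).prod ≠ 0)
    (i : ℕ) (hi : i < fs.length) :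
    (fs[i]'hi).1 (t[i]'(by omega)) ≠ 0 := by
  intro hz
  apply h
  apply List.prod_eq_zero
  have h1 : i < (List.zipWith (fun (f : PSer K) u => f.1 u) fs t).length := by
    simp [hlen]; omega
  have h2 := List.getElem_mem h1
  rwa [List.getElem_zipWith, hz] at h2

lemma bullet_finite (fs : List (PSer K)) :
    ∀ n, {S : PT | bulletCoeff fs S ≠ 0 ∧ degx S = n}.Finite := by
  intro n
  classical
  have hBfin : ({none} ∪ ⋃ f ∈ {g : PSer K | g ∈ fs}, {u : PT | f.1 u ≠ 0 ∧ degx u ≤ n}).Finite := by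
    apply Set.Finite.union (Set.finite_singleton _)
    apply Set.Finite.biUnion fs.finite_toSet
    intro f _
    have hsub : {u : PT | f.1 u ≠ 0 ∧ degx u ≤ n} ⊆
        ⋃ d ∈ Set.Iic n, {u : PT | f.1 u ≠ 0 ∧ degx u = d} := by
      rintro u ⟨h1, h2⟩
      exact Set.mem_biUnion h2 ⟨h1, rfl⟩
    exact ((Set.finite_Iic n).biUnion (fun d _ => f.2 d)).subset hsub
  apply Set.Finite.subset ((finite_lists hBfin fs.length).image graft)
  rintro S ⟨hne, hdeg⟩
  rw [bulletCoeff_eq_sum] at hne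
  obtain ⟨t, htm, hprod⟩ := Finset.exists_ne_zero_of_sum_ne_zero hne
  obtain ⟨hlen, hgr⟩ := mem_decompFS.mp htm
  refine ⟨t, ⟨hlen, ?_⟩, hgr⟩
  intro u hu
  obtain ⟨i, hi, rfl⟩ := List.mem_iff_getElem.mp hu
  have hif : i < fs.length := by omega
  refine Or.inr (Set.mem_biUnion (show fs[i]'hif ∈ {g : PSer K | g ∈ fs} from List.getElem_mem hif) ⟨?_, ?_⟩)
  · exact zip_ne_zero hlen hprod i hif
  · have hsum : degx (graft t) = (t.map degx).sum := degx_graft t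
    rw [hgr, hdeg] at hsum
    have hmem : degx (t[i]'hi) ∈ t.map degx := List.mem_map_of_mem (f := degx) (List.getElem_mem hi)
    have := List.single_le_sum (l := t.map degx) (fun _ _ => Nat.zero_le _) _ hmem
    omega

lemma bullet_val (fs : List (PSer K)) : (bullet fs).1 = bulletCoeff fs := by
  have key : bullet fs = (⟨bulletCoeff fs, bullet_finite fs⟩ : PSer K) := by
    unfold bullet; exact dif_pos (bullet_finite fs)
  rw [key]

lemma bullet_eq_zero_of_mem {fs : List (PSer K)} (h : (0 : PSer K) ∈ fs) :
    bullet fs = 0 := by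
  apply Subtype.ext; funext S
  rw [bullet_val, bulletCoeff_eq_sum]
  show _ = (0 : K)
  apply Finset.sum_eq_zero
  intro t htm
  obtain ⟨hlen, -⟩ := mem_decompFS.mp htm
  obtain ⟨i, hi, hz⟩ := List.mem_iff_getElem.mp h
  by_contra hp
  exact (zip_ne_zero hlen hp i hi) (by rw [hz]; rfl)

open Classical in
lemma prod_indicator : ∀ (l t : List PT), t.length = l.length →
    (List.zipWith (fun S u => if u = S then (1:K) else 0) l t).prod = if t = l then 1 else 0 := by
  intro l
  induction l with
  | nil =>
    intro t ht
    simp [List.length_eq_zero_iff.mp ht]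
  | cons a l ih =>
    intro t ht
    cases t with
    | nil => simp at ht
    | cons b t' =>
      simp only [List.length_cons, Nat.add_right_cancel_iff] at ht
      rw [List.zipWith_cons_cons, List.prod_cons, ih t' ht]
      by_cases h1 : b = a <;> by_cases h2 : t' = l <;> simp [h1, h2]

lemma bullet_mono (l : List PT) :
    bullet (l.map (fun S => (mono S : PSer K))) = mono (graft l) := by
  classical
  apply Subtype.ext; funext S
  rw [bullet_val, bulletCoeff_eq_sum, mono_coeff]
  simp only [List.length_map]
  have hstep : ∀ t ∈ decompFS l.length S,
      (List.zipWith (fun (f : PSer K) u => f.1 u) (l.map (fun S => (mono S : PSer K))) t).prod =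
        if t = l then 1 else 0 := by
    intro t htm
    obtain ⟨hlen, -⟩ := mem_decompFS.mp htm
    rw [List.zipWith_map_left]
    have hfn : (fun (a b : PT) => (mono a : PSer K).1 b) = fun a b => if b = a then (1:K) else 0 := by
      funext a b; rw [mono_coeff]
    rw [hfn, prod_indicator l t hlen]
  rw [Finset.sum_congr rfl hstep, Finset.sum_ite_eq' (decompFS l.length S) l (fun _ => (1:K))]
  by_cases hl : graft l = S
  · rw [if_pos (mem_decompFS.mpr ⟨rfl, hl⟩), if_pos hl.symm]
  · rw [if_neg (fun hm => hl (mem_decompFS.mp hm).2), if_neg (fun he => hl he.symm)]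

lemma zip_set (L : List (PSer K)) (t : List PT) (ht : t.length = L.length)
    {i : ℕ} (hi : i < L.length) (c : PSer K) :
    List.zipWith (fun f u => f.1 u) (L.set i c) t =
      (List.zipWith (fun f u => f.1 u) L t).set i (c.1 (t[i]'(by omega))) := by
  apply List.ext_getElem (by simp)
  intro j h1 h2
  simp only [List.getElem_zipWith, List.getElem_set]
  by_cases hj : i = j
  · subst hj
    simp
  · simp [hj]

lemma bullet_set_sub (L : List (PSer K)) {i : ℕ} (hi : i < L.length) (a b : PSer K) :
    bullet (L.set i (a - b)) = bullet (L.set i a) - bullet (L.set i b) := by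
  apply Subtype.ext; funext S
  rw [PSer.sub_coeff, bullet_val, bullet_val, bullet_val,
    bulletCoeff_eq_sum, bulletCoeff_eq_sum, bulletCoeff_eq_sum]
  simp only [List.length_set]
  rw [← Finset.sum_sub_distrib]
  apply Finset.sum_congr rfl
  intro t htm
  obtain ⟨hlen, -⟩ := mem_decompFS.mp htm
  rw [zip_set L t hlen hi, zip_set L t hlen hi, zip_set L t hlen hi]
  have hz : i < (List.zipWith (fun (f : PSer K) u => f.1 u) L t).length := by
    simp [hlen]; omega
  rw [List.prod_set, List.prod_set, List.prod_set]
  simp only [if_pos hz, PSer.sub_coeff]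
  ring

lemma onlyX_bullet {fs : List (PSer K)} (h : ∀ f ∈ fs, OnlyX f) : OnlyX (bullet fs) := by
  intro S hS
  rw [bullet_val, bulletCoeff_eq_sum] at hS
  obtain ⟨t, htm, hprod⟩ := Finset.exists_ne_zero_of_sum_ne_zero hS
  obtain ⟨hlen, hgr⟩ := mem_decompFS.mp htm
  rw [← hgr, degy_graft]
  apply List.sum_eq_zero
  intro n hn
  simp only [List.mem_map] at hn
  obtain ⟨u, hu, rfl⟩ := hn
  obtain ⟨i, hi, rfl⟩ := List.mem_iff_getElem.mp hu
  have hif : i < fs.length := by omega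
  exact h _ (List.getElem_mem hif) _ (zip_ne_zero hlen hprod i hif)

lemma bulletX_val (fs : List (Kx K)) :
    (bulletX fs).1 = bullet (fs.map (fun f => f.1)) := by
  rw [bulletX, dif_pos]
  apply onlyX_bullet
  rintro f hf
  simp only [List.mem_map] at hf
  obtain ⟨g, -, rfl⟩ := hf
  exact g.2

open Classical in
/-- A planar monomial as an element of `K{{x}}` (junk value `0` if it involves `y`). -/
noncomputable def muX (S : PT) : Kx K :=
  if h : OnlyX (mono S : PSer K) then ⟨mono S, h⟩ else 0

lemma onlyX_mono {S : PT} (h : degy S = 0) : OnlyX (mono S : PSer K) := by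
  intro T hT
  rw [mono_coeff] at hT
  by_cases he : T = S
  · subst he; exact h
  · simp [he] at hT

lemma muX_val {S : PT} (h : degy S = 0) : (muX S : Kx K).1 = mono S := by
  rw [muX, dif_pos (onlyX_mono h)]

lemma ordx_le {f : PSer K} {S : PT} (h : f.1 S ≠ 0) : ordx f ≤ (degx S : ℕ∞) :=
  iInf₂_le S h

lemma le_ordx {f : PSer K} {n : ℕ∞} (h : ∀ S, f.1 S ≠ 0 → n ≤ (degx S : ℕ∞)) :
    n ≤ ordx f :=
  le_iInf₂ h

lemma ordx_eq_top_iff {f : PSer K} : ordx f = ⊤ ↔ f = 0 := by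
  constructor
  · intro h
    apply Subtype.ext; funext S
    by_contra hS
    have := ordx_le (f := f) (S := S) hS
    rw [h, top_le_iff] at this
    exact (ENat.coe_ne_top _) this
  · rintro rfl
    exact le_antisymm le_top (le_ordx (fun S hS => absurd rfl hS))

lemma normx_nonneg (f : PSer K) : 0 ≤ normx f := by
  rw [normx]; split
  · exact le_refl 0
  · positivity

lemma normx_eq_zero_iff {f : PSer K} : normx f = 0 ↔ f = 0 := by
  by_cases h : ordx f = ⊤
  · rw [normx, if_pos h]
    simp [ordx_eq_top_iff.mp h]
  · rw [normx, if_neg h]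
    constructor
    · intro h0; exact absurd h0 (by positivity)
    · intro h0; exact absurd (ordx_eq_top_iff.mpr h0) h

lemma ordx_neg (f : PSer K) : ordx (-f) = ordx f := by
  rw [ordx, ordx]
  apply iInf_congr
  intro S
  simp

lemma normx_neg (f : PSer K) : normx (-f) = normx f := by
  rw [normx, normx, ordx_neg]

lemma normx_anti {f g : PSer K} (h : ordx f ≤ ordx g) : normx g ≤ normx f := by
  by_cases hg : ordx g = ⊤
  · rw [normx, if_pos hg]
    exact normx_nonneg f
  · have hf : ordx f ≠ ⊤ := fun hf => hg (top_le_iff.mp (hf ▸ h))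
    rw [normx, if_neg hg, normx, if_neg hf]
    apply pow_le_pow_of_le_one (by norm_num) (by norm_num)
    have hcf := ENat.coe_toNat hf
    have hcg := ENat.coe_toNat hg
    rw [← hcf, ← hcg, Nat.cast_le (α := ℕ∞)] at h
    exact h

lemma normx_add_le (f g : PSer K) : normx (f + g) ≤ max (normx f) (normx g) := by
  have hmin : min (ordx f) (ordx g) ≤ ordx (f + g) := by
    apply le_ordx
    intro S hS
    rw [PSer.add_coeff] at hS
    by_cases hf : f.1 S = 0
    · have hgS : g.1 S ≠ 0 := fun h => hS (by rw [hf, h, add_zero])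
      exact le_trans (min_le_right _ _) (ordx_le hgS)
    · exact le_trans (min_le_left _ _) (ordx_le hf)
  rcases le_total (ordx f) (ordx g) with h | h
  · rw [min_eq_left h] at hmin
    exact le_trans (normx_anti hmin) (le_max_left _ _)
  · rw [min_eq_right h] at hmin
    exact le_trans (normx_anti hmin) (le_max_right _ _)

lemma normx_sub_le (f g : PSer K) : normx (f - g) ≤ max (normx f) (normx g) := by
  rw [sub_eq_add_neg]
  calc normx (f + -g) ≤ max (normx f) (normx (-g)) := normx_add_le f (-g)
  _ = max (normx f) (normx g) := by rw [normx_neg]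

/-- Coefficient extraction at `U` as a linear map. -/
noncomputable def evalL (U : PT) : PSer K →ₗ[K] K where
  toFun f := f.1 U
  map_add' f g := rfl
  map_smul' a f := rfl

lemma comp_eq_sum (f : PSer K) (n : ℕ) :
    comp f n = ∑ S ∈ (f.2 n).toFinset, f.1 S • mono S := by
  classical
  apply Subtype.ext; funext U
  have h1 : (∑ S ∈ (f.2 n).toFinset, f.1 S • mono S).1 U =
      ∑ S ∈ (f.2 n).toFinset, f.1 S * (mono S).1 U := by
    rw [show (∑ S ∈ (f.2 n).toFinset, f.1 S • mono S).1 U =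
      evalL U (∑ S ∈ (f.2 n).toFinset, f.1 S • mono S) from rfl, map_sum]
    rfl
  rw [h1]
  have h2 : ∀ S ∈ (f.2 n).toFinset, f.1 S * (mono S).1 U =
      if U = S then f.1 S else 0 := by
    intro S _
    rw [mono_coeff]
    split <;> simp
  rw [Finset.sum_congr rfl h2, Finset.sum_ite_eq (f.2 n).toFinset U (fun S => f.1 S)]
  show (if degx U = n then f.1 U else 0) = _
  by_cases hU : f.1 U = 0
  · split <;> split <;> simp_all
  · by_cases hd : degx U = n
    · rw [if_pos hd, if_pos (by simp [hd, hU])]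
    · rw [if_neg hd, if_neg (by simp [hd])]

lemma compX_eq_sum (f : Kx K) (n : ℕ) :
    compX f n = ∑ S ∈ (f.1.2 n).toFinset, f.1.1 S • muX S := by
  apply Subtype.ext
  rw [show (compX f n).1 = comp f.1 n from rfl, comp_eq_sum]
  rw [show ((∑ S ∈ (f.1.2 n).toFinset, f.1.1 S • muX S : Kx K) : PSer K) =
      ∑ S ∈ (f.1.2 n).toFinset, ((f.1.1 S • muX S : Kx K) : PSer K) from
    map_sum ((kxSub K).subtype) _ _]
  apply Finset.sum_congr rfl
  intro S hS
  rw [Set.Finite.mem_toFinset] at hS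
  rw [show ((f.1.1 S • muX S : Kx K) : PSer K) = f.1.1 S • (muX S : Kx K).1 from rfl,
    muX_val (f.2 S hS.1)]

/-- Partial sums of a planar power series in `x`. -/
noncomputable def partialX (f : Kx K) (N : ℕ) : Kx K :=
  ∑ n ∈ Finset.range N, compX f n

lemma dist_partialX (f : Kx K) (N : ℕ) :
    distKx (partialX f N) f ≤ (2⁻¹ : ℝ) ^ N := by
  classical
  have hcoeff : ∀ S : PT, degx S < N → ((partialX f N).1 - f.1).1 S = 0 := by
    intro S hS
    rw [PSer.sub_coeff]
    have h1 : (partialX f N).1.1 S = ∑ n ∈ Finset.range N, (comp f.1 n).1 S := by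
      rw [show (partialX f N).1.1 S = evalL S (partialX f N).1 from rfl]
      rw [show ((partialX f N) : PSer K) = ∑ n ∈ Finset.range N, (compX f n : PSer K) from by
        rw [partialX]; exact map_sum ((kxSub K).subtype) _ _]
      rw [map_sum]
      rfl
    rw [h1]
    have h2 : ∀ n ∈ Finset.range N, (comp f.1 n).1 S =
        if degx S = n then f.1.1 S else 0 := fun n _ => rfl
    rw [Finset.sum_congr rfl h2,
      Finset.sum_ite_eq (Finset.range N) (degx S) (fun _ => f.1.1 S),
      if_pos (Finset.mem_range.mpr hS), sub_self]
  have hord : (N : ℕ∞) ≤ ordx ((partialX f N).1 - f.1) := by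
    apply le_ordx
    intro S hS
    by_contra hlt
    push_neg at hlt
    rw [Nat.cast_lt (α := ℕ∞)] at hlt
    exact hS (hcoeff S hlt)
  show normx ((partialX f N).1 - f.1) ≤ _
  rw [normx]
  split
  · positivity
  · rename_i htop
    apply pow_le_pow_of_le_one (by norm_num) (by norm_num)
    have := ENat.coe_toNat htop
    rw [← this, Nat.cast_le (α := ℕ∞)] at hord
    exact hord

/-- The main density principle: a continuous linear map on `K{{x}}` vanishing on all
planar monomials vanishes identically. -/
lemma vanish_of_cont {δ : Kx K → PSer K} (hlin : IsLinearMap K δ)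
    (hcont : ContWrt distKx distx δ)
    (hmono : ∀ S : PT, degy S = 0 → δ (muX S) = 0) : ∀ f, δ f = 0 := by
  intro f
  have h0 : ∀ N, δ (partialX f N) = 0 := by
    intro N
    rw [partialX, show δ (∑ n ∈ Finset.range N, compX f n) =
      IsLinearMap.mk' δ hlin (∑ n ∈ Finset.range N, compX f n) from rfl, map_sum]
    apply Finset.sum_eq_zero
    intro n _
    rw [IsLinearMap.mk'_apply, compX_eq_sum, show δ (∑ S ∈ (f.1.2 n).toFinset, f.1.1 S • muX S) =
      IsLinearMap.mk' δ hlin (∑ S ∈ (f.1.2 n).toFinset, f.1.1 S • muX S) from rfl, map_sum]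
    apply Finset.sum_eq_zero
    intro S hS
    rw [Set.Finite.mem_toFinset] at hS
    rw [map_smul, IsLinearMap.mk'_apply, hmono S (f.2 S hS.1), smul_zero]
  have key : ∀ ε : ℝ, 0 < ε → normx (δ f) < ε := by
    intro ε hε
    obtain ⟨d, hd, hball⟩ := hcont f ε hε
    obtain ⟨N, hN⟩ : ∃ N : ℕ, (2⁻¹ : ℝ) ^ N < d := by
      obtain ⟨N, hN⟩ := exists_pow_lt_of_lt_one hd (by norm_num : (2⁻¹ : ℝ) < 1)
      exact ⟨N, hN⟩
    have hb := hball (partialX f N) (lt_of_le_of_lt (dist_partialX f N) hN)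
    rw [h0 N] at hb
    have : distx 0 (δ f) = normx (δ f) := by
      show normx (0 - δ f) = _
      rw [zero_sub, normx_neg]
    rwa [this] at hb
  have hz : normx (δ f) = 0 := by
    rcases eq_or_lt_of_le (normx_nonneg (δ f)) with h | h
    · exact h.symm
    · exact absurd (key _ h) (lt_irrefl _)
  exact normx_eq_zero_iff.mp hz

lemma reduceOption_map_some (ts : List PTree) : (ts.map some).reduceOption = ts := by
  induction ts <;> simp [*]

lemma graft_cons (t1 t2 : PTree) (ts : List PTree) :
    graft (some t1 :: some t2 :: ts.map some) = some (.node t1 t2 ts) := by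
  have hro : (some t1 :: some t2 :: ts.map some : List PT).reduceOption = t1 :: t2 :: ts := by
    simp [reduceOption_map_some]
  show (match (some t1 :: some t2 :: ts.map some : List PT).reduceOption with
    | [] => (none : PT)
    | [u] => some u
    | u1 :: u2 :: us => some (.node u1 u2 us)) = _
  rw [hro]

lemma muX_none : (muX none : Kx K) = oneX :=
  Subtype.ext (by rw [muX_val (show degy none = 0 from rfl)]; rfl)

lemma degy_leafx : degy (some (.leaf .vx)) = 0 := by
  show PTree.countLeaf .vy (.leaf .vx) = 0
  rw [PTree.countLeaf]
  simp

lemma muX_leafx : (muX (some (.leaf .vx)) : Kx K) = xX :=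
  Subtype.ext (by rw [muX_val degy_leafx]; rfl)

lemma degy_children {t1 t2 : PTree} {ts : List PTree}
    (h : degy (some (.node t1 t2 ts)) = 0) :
    ∀ u ∈ (some t1 :: some t2 :: ts.map some : List PT), degy u = 0 := by
  have hn : PTree.countLeaf .vy t1 + PTree.countLeaf .vy t2 +
      (ts.map (PTree.countLeaf .vy)).sum = 0 := by
    have h' := h
    rwa [show degy (some (.node t1 t2 ts)) = PTree.countLeaf .vy (.node t1 t2 ts) from rfl,
      countLeaf_node] at h'
  intro u hu
  rcases List.mem_cons.mp hu with rfl | hu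
  · show PTree.countLeaf .vy t1 = 0; omega
  rcases List.mem_cons.mp hu with rfl | hu
  · show PTree.countLeaf .vy t2 = 0; omega
  · obtain ⟨w, hw, rfl⟩ := List.mem_map.mp hu
    show PTree.countLeaf .vy w = 0
    have hsum : (ts.map (PTree.countLeaf .vy)).sum = 0 := by omega
    exact List.sum_eq_zero_iff.mp hsum _ (List.mem_map_of_mem hw)

lemma muX_node {t1 t2 : PTree} {ts : List PTree} (h : degy (some (.node t1 t2 ts)) = 0) :
    (muX (some (.node t1 t2 ts)) : Kx K) =
      bulletX ((some t1 :: some t2 :: ts.map some).map muX) := by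
  apply Subtype.ext
  rw [muX_val h, bulletX_val, List.map_map]
  have hcg : (some t1 :: some t2 :: ts.map some).map ((fun f : Kx K => f.1) ∘ muX)
      = (some t1 :: some t2 :: ts.map some).map (fun S => (mono S : PSer K)) := by
    apply List.map_congr_left
    intro u hu
    exact muX_val (degy_children h u hu)
  rw [hcg, bullet_mono, graft_cons]

lemma mono_vanish {L : Kx K → PSer K} {δ : Kx K → PSer K}
    (hgr : ∀ fs : List (Kx K), 2 ≤ fs.length →
      δ (bulletX fs) = ∑ i : Fin fs.length, bullet ((fs.map L).set i.1 (δ (fs.get i))))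
    (hx : δ xX = 0) (h1 : δ oneX = 0) : ∀ S : PT, degy S = 0 → δ (muX S) = 0 := by
  have H : ∀ n : ℕ, ∀ T : PTree, sizeOf T < n → PTree.countLeaf .vy T = 0 →
      δ (muX (some T)) = 0 := by
    intro n
    induction n with
    | zero => intro T hT _; exact absurd hT (Nat.not_lt_zero _)
    | succ n ih =>
      intro T hT hy
      cases T with
      | leaf v =>
        cases v with
        | vx => rw [muX_leafx]; exact hx
        | vy => rw [PTree.countLeaf] at hy; simp at hy
      | node t1 t2 ts =>
        have hdeg : degy (some (.node t1 t2 ts)) = 0 := hy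
        set l : List PT := some t1 :: some t2 :: ts.map some with hl
        rw [show (muX (some (.node t1 t2 ts)) : Kx K) = bulletX (l.map muX) from muX_node hdeg]
        rw [hgr (l.map muX) (by simp [hl])]
        apply Finset.sum_eq_zero
        intro i _
        have hz : δ ((l.map muX).get i) = 0 := by
          have hmem : (l.map muX).get i ∈ l.map muX := List.get_mem _ _
          obtain ⟨u, hu, heq⟩ := List.mem_map.mp hmem
          rw [← heq]
          have hyu : degy u = 0 := degy_children hdeg u hu
          have hspec : sizeOf (PTree.node t1 t2 ts) = 1 + sizeOf t1 + sizeOf t2 + sizeOf ts :=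
            PTree.node.sizeOf_spec t1 t2 ts
          rcases List.mem_cons.mp hu with rfl | hu'
          · exact ih t1 (by omega) hyu
          rcases List.mem_cons.mp hu' with rfl | hu''
          · exact ih t2 (by omega) hyu
          · obtain ⟨w, hw, rfl⟩ := List.mem_map.mp hu''
            have hws := List.sizeOf_lt_of_mem hw
            exact ih w (by omega) hyu
        rw [hz]
        apply bullet_eq_zero_of_mem
        have hil : i.1 < (((l.map muX).map L).set i.1 0).length := by
          simpa using i.2
        have hset : (((l.map muX).map L).set i.1 0)[i.1]'hil = 0 :=
          List.getElem_set_self (by simpa using i.2)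
        have hm := List.getElem_mem hil
        rwa [hset] at hm
  intro S hS
  cases S with
  | none => rw [muX_none]; exact h1
  | some T => exact H (sizeOf T + 1) T (by omega) hS

lemma agree_mono {g : Kx K} {φ : Kx K → Kx K} (hφ : IsSubstHomX g φ)
    {h : PSer K} {dφ : PSer K → PSer K} (hdφ : IsSubstHom g.1 h dφ) :
    ∀ S : PT, degy S = 0 → dφ (muX S).1 = (φ (muX S)).1 := by
  have H : ∀ n : ℕ, ∀ T : PTree, sizeOf T < n → PTree.countLeaf .vy T = 0 →
      dφ (muX (some T)).1 = (φ (muX (some T))).1 := by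
    intro n
    induction n with
    | zero => intro T hT _; exact absurd hT (Nat.not_lt_zero _)
    | succ n ih =>
      intro T hT hy
      cases T with
      | leaf v =>
        cases v with
        | vx =>
          rw [muX_leafx]
          rw [show (xX : Kx K).1 = Xps from rfl, hdφ.map_X, hφ.map_X]
        | vy => rw [PTree.countLeaf] at hy; simp at hy
      | node t1 t2 ts =>
        have hdeg : degy (some (.node t1 t2 ts)) = 0 := hy
        set l : List PT := some t1 :: some t2 :: ts.map some with hl
        rw [show (muX (some (.node t1 t2 ts)) : Kx K) = bulletX (l.map muX) from muX_node hdeg]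
        rw [bulletX_val, hdφ.map_graft _ (by simp [hl]), hφ.map_graft _ (by simp [hl]),
          bulletX_val]
        congr 1
        simp only [List.map_map]
        apply List.map_congr_left
        intro v hv
        have hyv : degy v = 0 := degy_children hdeg v hv
        have hspec : sizeOf (PTree.node t1 t2 ts) = 1 + sizeOf t1 + sizeOf t2 + sizeOf ts :=
          PTree.node.sizeOf_spec t1 t2 ts
        show dφ (muX v).1 = (φ (muX v)).1
        rcases List.mem_cons.mp hv with rfl | hv'
        · exact ih t1 (by omega) hyv
        rcases List.mem_cons.mp hv' with rfl | hv''
        · exact ih t2 (by omega) hyv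
        · obtain ⟨w, hw, rfl⟩ := List.mem_map.mp hv''
          have hws := List.sizeOf_lt_of_mem hw
          exact ih w (by omega) hyv
  intro S hS
  cases S with
  | none =>
    rw [muX_none, show (oneX : Kx K).1 = onePS from rfl, hdφ.map_one, hφ.map_one]
    rfl
  | some T => exact H (sizeOf T + 1) T (by omega) hS

lemma agree {g : Kx K} {φ : Kx K → Kx K} (hφ : IsSubstHomX g φ)
    {h : PSer K} {dφ : PSer K → PSer K} (hdφ : IsSubstHom g.1 h dφ) :
    ∀ f : Kx K, dφ f.1 = (φ f).1 := by
  have hlin : IsLinearMap K (fun f : Kx K => dφ f.1 - (φ f).1) := by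
    constructor
    · intro a b
      show dφ (a + b).1 - (φ (a + b)).1 = _
      rw [show ((a + b : Kx K)).1 = a.1 + b.1 from rfl, hdφ.linear.map_add,
        hφ.linear.map_add, show ((φ a + φ b : Kx K)).1 = (φ a).1 + (φ b).1 from rfl]
      abel
    · intro c a
      show dφ (c • a).1 - (φ (c • a)).1 = c • (dφ a.1 - (φ a).1)
      rw [show ((c • a : Kx K)).1 = c • a.1 from rfl, hdφ.linear.map_smul,
        hφ.linear.map_smul, show ((c • φ a : Kx K)).1 = c • (φ a).1 from rfl, smul_sub]
  have hcont : ContWrt distKx distx (fun f : Kx K => dφ f.1 - (φ f).1) := by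
    intro f ε hε
    obtain ⟨d1, hd1, hb1⟩ := hdφ.cont f.1 ε hε
    obtain ⟨d2, hd2, hb2⟩ := hφ.cont f ε hε
    refine ⟨min d1 d2, lt_min hd1 hd2, ?_⟩
    intro b hb
    show normx ((dφ b.1 - (φ b).1) - (dφ f.1 - (φ f).1)) < ε
    have he : (dφ b.1 - (φ b).1) - (dφ f.1 - (φ f).1) =
        (dφ b.1 - dφ f.1) + -((φ b).1 - (φ f).1) := by abel
    rw [he]
    apply lt_of_le_of_lt (normx_add_le _ _)
    rw [normx_neg]
    apply max_lt
    · exact hb1 b.1 (lt_of_lt_of_le hb (min_le_left _ _))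
    · exact hb2 b (lt_of_lt_of_le hb (min_le_right _ _))
  have hvan := vanish_of_cont hlin hcont (fun S hS => by
    show dφ (muX S).1 - (φ (muX S)).1 = 0
    rw [agree_mono hφ hdφ S hS, sub_self])
  intro f
  exact sub_eq_zero.mp (hvan f)

end Aux
end Planar

open Planar in
/-- With `φ = φ_g` and `dφ` as in the chain rule, the map
`δ = (dφ) ∘ d − d ∘ φ` satisfies
`δ(•_m(f₁,…,f_m)) = Σ_i •_m(φ(f₁),…,φ(f_{i−1}), δ(f_i), φ(f_{i+1}),…,φ(f_m))`;
consequently any continuous `K`-linear map `δ : K{{x}} → K{{x,y}` satisfying this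
identity together with `δ(x) = 0` and `δ(1_P) = 0` is identically zero. -/
theorem planar_delta_derivation (K : Type) [Field K]
    (g : Kx K) (hg : 1 ≤ ordx g.1)
    (φ : Kx K → Kx K) (hφ : IsSubstHomX g φ)
    (d : Kx K → PSer K) (hd : IsUDeriv d)
    (dφ : PSer K → PSer K) (hdφ : IsSubstHom g.1 (d g) dφ) :
    (∀ fs : List (Kx K), 2 ≤ fs.length →
      (fun f : Kx K => dφ (d f) - d (φ f)) (bulletX fs) =
        ∑ i : Fin fs.length,
          bullet ((fs.map (fun t => (φ t).1)).set i.1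
            ((fun f : Kx K => dφ (d f) - d (φ f)) (fs.get i)))) ∧
    (∀ δ : Kx K → PSer K, IsLinearMap K δ → ContWrt distKx distx δ →
      (∀ fs : List (Kx K), 2 ≤ fs.length →
        δ (bulletX fs) = ∑ i : Fin fs.length,
          bullet ((fs.map (fun t => (φ t).1)).set i.1 (δ (fs.get i)))) →
      δ xX = 0 → δ oneX = 0 → ∀ f : Kx K, δ f = 0) := by
  have hagree : ∀ f : Kx K, dφ f.1 = (φ f).1 := agree hφ hdφ
  constructor
  · intro fs hlen
    show dφ (d (bulletX fs)) - d (φ (bulletX fs)) =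
      ∑ i : Fin fs.length, bullet ((fs.map (fun t => (φ t).1)).set i.1
        (dφ (d (fs.get i)) - d (φ (fs.get i))))
    rw [hd.leibniz fs hlen, hφ.map_graft fs hlen,
      hd.leibniz (fs.map φ) (by simpa using hlen)]
    rw [show dφ (∑ i : Fin fs.length,
        bullet ((fs.map (fun f => f.1)).set i.1 (d (fs.get i)))) =
      ∑ i : Fin fs.length, dφ (bullet ((fs.map (fun f => f.1)).set i.1 (d (fs.get i)))) from
      map_sum (IsLinearMap.mk' dφ hdφ.linear) _ _]
    have hL : fs.length = (fs.map φ).length := (List.length_map _).symm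
    have hsum2 : (∑ i : Fin (fs.map φ).length,
        bullet (((fs.map φ).map (fun f => f.1)).set i.1 (d ((fs.map φ).get i)))) =
        ∑ i : Fin fs.length,
          bullet ((fs.map (fun t => (φ t).1)).set i.1 (d (φ (fs.get i)))) := by
      rw [← Fin.sum_congr' _ hL]
      apply Finset.sum_congr rfl
      intro i _
      have e1 : (fs.map φ).map (fun f : Kx K => f.1) = fs.map (fun t => (φ t).1) := by
        rw [List.map_map]; rfl
      have e2 : (fs.map φ).get (Fin.cast hL i) = φ (fs.get i) := by
        rw [List.get_eq_getElem, List.get_eq_getElem, List.getElem_map]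
        rfl
      rw [e1, e2]
      rfl
    rw [hsum2, ← Finset.sum_sub_distrib]
    apply Finset.sum_congr rfl
    intro i _
    rw [hdφ.map_graft _ (by simp [hlen])]
    rw [List.map_set, List.map_map]
    have e3 : fs.map (dφ ∘ (fun f : Kx K => f.1)) = fs.map (fun t => (φ t).1) := by
      apply List.map_congr_left
      intro u _
      exact hagree u
    rw [e3]
    rw [← bullet_set_sub _ (by simp)]
  · intro δ hlin hcont hgr hx h1
    exact vanish_of_cont hlin hcont (mono_vanish hgr hx h1)
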